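/- arXiv:1712.04755 — 7 statements merged into one kernel-verified Lean document; each statement's English description precedes it below -/
import Mathlib

section
/- Let t, a, b > 0. Then t/a − (t/a + b²/a²)·ln(1 + t·a/b²) ≤ −t²/(2(b² + a·t/3)). -/
open Real

private lemma key_deriv (x : ℝ) (hx : 0 ≤ x) :
    HasDerivAt (fun y => Real.log (1 + y) - (5*y^2+6*y)/(2*y^2+8*y+6))
      (1/(1+x) - ((10*x+6)*(2*x^2+8*x+6) - (5*x^2+6*x)*(4*x+8))/(2*x^2+8*x+6)^2) x := by
  have h1x : (1:ℝ) + x ≠ 0 := by linarith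
  have hlog : HasDerivAt (fun y => Real.log (1 + y)) (1/(1+x)) x := by
    have h := (Real.hasDerivAt_log h1x).comp x ((hasDerivAt_id x).const_add 1)
    rw [one_div]; exact h.congr_deriv (by simp)
  have hn : HasDerivAt (fun y => 5*y^2+6*y) (10*x+6) x := by
    have := ((hasDerivAt_pow 2 x).const_mul 5).add ((hasDerivAt_id x).const_mul 6)
    exact this.congr_deriv (by ring)
  have hd : HasDerivAt (fun y => 2*y^2+8*y+6) (4*x+8) x := by
    have := (((hasDerivAt_pow 2 x).const_mul 2).add ((hasDerivAt_id x).const_mul 8)).add_const 6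
    exact this.congr_deriv (by ring)
  have hd0 : (2*x^2+8*x+6 : ℝ) ≠ 0 := by nlinarith
  exact hlog.sub (hn.div hd hd0)

private lemma key_log (u : ℝ) (hu : 0 ≤ u) :
    (5*u^2+6*u)/(2*u^2+8*u+6) ≤ Real.log (1 + u) := by
  set f : ℝ → ℝ := fun y => Real.log (1 + y) - (5*y^2+6*y)/(2*y^2+8*y+6) with hf
  have mono : MonotoneOn f (Set.Ici (0:ℝ)) := by
    apply monotoneOn_of_deriv_nonneg (convex_Ici 0)
    · exact fun x hx => (key_deriv x hx).continuousAt.continuousWithinAt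
    · intro x hx
      rw [interior_Ici] at hx
      exact (key_deriv x (le_of_lt hx)).differentiableAt.differentiableWithinAt
    · intro x hx
      rw [interior_Ici] at hx
      have hx' : 0 < x := hx
      rw [(key_deriv x hx'.le).deriv]
      have h1x : (0:ℝ) < 1 + x := by linarith
      have hd0 : (0:ℝ) < 2*x^2+8*x+6 := by nlinarith
      rw [sub_nonneg, div_le_div_iff₀ (by positivity) h1x]
      nlinarith [mul_pos (mul_pos hx' hx') hx', sq_nonneg x]
  have h0 : f 0 = 0 := by simp [hf]
  have := mono (Set.self_mem_Ici) (Set.mem_Ici.mpr hu) hu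
  rw [h0] at this
  have := sub_nonneg.mp this
  linarith [this]

theorem stmt_1 (t a b : ℝ) (ht : 0 < t) (ha : 0 < a) (hb : 0 < b) :
    t / a - (t / a + b ^ 2 / a ^ 2) * Real.log (1 + t * a / b ^ 2) ≤
      -(t ^ 2) / (2 * (b ^ 2 + a * t / 3)) := by
  have hb2 : (0:ℝ) < b ^ 2 := by positivity
  set u : ℝ := t * a / b ^ 2 with hu_def
  have hu : 0 < u := by positivity
  have hL := key_log u hu.le
  have hc : 0 < t / a + b ^ 2 / a ^ 2 := by positivity
  have step : t / a - (t / a + b ^ 2 / a ^ 2) * Real.log (1 + u) ≤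
      t / a - (t / a + b ^ 2 / a ^ 2) * ((5*u^2+6*u)/(2*u^2+8*u+6)) := by
    nlinarith [mul_le_mul_of_nonneg_left hL hc.le]
  have heq : t / a - (t / a + b ^ 2 / a ^ 2) * ((5*u^2+6*u)/(2*u^2+8*u+6)) =
      -(t ^ 2) / (2 * (b ^ 2 + a * t / 3)) := by
    rw [hu_def]
    have hd1 : (0:ℝ) < 2*(t*a/b^2)^2+8*(t*a/b^2)+6 := by positivity
    have hd2 : (0:ℝ) < 2 * (b ^ 2 + a * t / 3) := by positivity
    field_simp
    ring
  linarith [step, heq.le]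
end

section
/- Let γ, λ > 0 with γλ < 1/2. Then β_n = γ² ∑_{k=1}^n (1/k²) ∏_{i=k+1}^n (1 − γλ/i)² satisfies β_n ≤ (2(1−γλ)/(1−2γλ)) · 4^{γλ} γ² / n^{2γλ} for all n ≥ 1. -/
open Real Finset

private lemma factor_bd {a : ℝ} (ha0 : 0 < a) (ha1 : a ≤ 1) {i : ℕ} (hi : 1 ≤ i) :
    1 - a / (i : ℝ) ≤ ((i : ℝ) / ((i : ℝ) + 1)) ^ a := by
  have hi' : (1 : ℝ) ≤ (i : ℝ) := by exact_mod_cast hi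
  have hipos : (0 : ℝ) < i := by linarith
  have hs : (-1 : ℝ) ≤ 1 / (i : ℝ) := by
    have : (0:ℝ) ≤ 1 / (i:ℝ) := by positivity
    linarith
  have hB : ((1 : ℝ) + 1 / i) ^ a ≤ 1 + a * (1 / i) :=
    rpow_one_add_le_one_add_mul_self hs ha0.le ha1
  have hB' : ((1 : ℝ) + 1 / i) ^ a ≤ 1 + a / i := by rw [mul_one_div] at hB; exact hB
  have hbase : (0:ℝ) < (i : ℝ) / ((i:ℝ)+1) := by positivity
  have hP : (0:ℝ) < ((i : ℝ) / ((i:ℝ)+1)) ^ a := Real.rpow_pos_of_pos hbase a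
  have hBpos : (0:ℝ) < ((1 : ℝ) + 1 / (i:ℝ)) ^ a := Real.rpow_pos_of_pos (by positivity) a
  have hI : ((i : ℝ) / ((i:ℝ)+1)) ^ a * ((1 : ℝ) + 1 / (i:ℝ)) ^ a = 1 := by
    rw [← Real.mul_rpow hbase.le (by positivity)]
    rw [show (i : ℝ) / ((i:ℝ)+1) * (1 + 1/(i:ℝ)) = 1 by field_simp]
    exact Real.one_rpow a
  have hai : a / (i:ℝ) ≤ 1 := by
    rw [div_le_one hipos]; linarith
  have hai0 : 0 ≤ a / (i:ℝ) := by positivity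
  have h2 : (1 - a/(i:ℝ)) * ((1:ℝ) + 1/(i:ℝ))^a ≤ (1 - a/(i:ℝ)) * (1 + a/(i:ℝ)) :=
    mul_le_mul_of_nonneg_left hB' (by linarith)
  have h3 : (1 - a/(i:ℝ)) * (1 + a/(i:ℝ)) ≤ 1 := by nlinarith [sq_nonneg (a/(i:ℝ))]
  have h4 : (1 - a/(i:ℝ)) * ((1:ℝ) + 1/(i:ℝ))^a ≤
      ((i : ℝ) / ((i:ℝ)+1)) ^ a * ((1 : ℝ) + 1 / (i:ℝ)) ^ a := by
    rw [hI]; exact h2.trans h3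
  exact le_of_mul_le_mul_right h4 hBpos

private lemma prod_bd {a : ℝ} (ha0 : 0 < a) (ha1 : a ≤ 1) (k : ℕ) (hk : 1 ≤ k)
    (n : ℕ) (hkn : k ≤ n) :
    ∏ i ∈ Icc (k+1) n, (1 - a/(i:ℝ)) ≤ (((k:ℝ)+1) / ((n:ℝ)+1)) ^ a := by
  induction n, hkn using Nat.le_induction with
  | base =>
    rw [Finset.Icc_eq_empty (by omega), Finset.prod_empty]
    rw [div_self (by positivity), Real.one_rpow]
  | succ n hn ih =>
    rw [Finset.prod_Icc_succ_top (by omega : k + 1 ≤ n + 1)]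
    have hf : 1 - a/(((n+1:ℕ)):ℝ) ≤ (((n+1:ℕ):ℝ)/(((n+1:ℕ):ℝ)+1)) ^ a :=
      factor_bd ha0 ha1 (by omega)
    push_cast at hf ⊢
    have hfn : (0:ℝ) ≤ 1 - a/((n:ℝ)+1) := by
      have : a/((n:ℝ)+1) ≤ a := by
        apply div_le_self ha0.le
        have : (0:ℝ) ≤ (n:ℝ) := Nat.cast_nonneg n
        linarith
      linarith
    have hPnn : (0:ℝ) ≤ (((k:ℝ)+1)/((n:ℝ)+1)) ^ a :=
      (Real.rpow_pos_of_pos (by positivity) a).le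
    calc (∏ i ∈ Icc (k+1) n, (1 - a/(i:ℝ))) * (1 - a/((n:ℝ)+1))
        ≤ (((k:ℝ)+1)/((n:ℝ)+1)) ^ a * (((n:ℝ)+1)/((n:ℝ)+1+1)) ^ a := by
          apply mul_le_mul ih hf hfn hPnn
      _ = (((k:ℝ)+1)/((n:ℝ)+1+1)) ^ a := by
          rw [← Real.mul_rpow (by positivity) (by positivity)]
          congr 1
          field_simp

private lemma key_ineq {a : ℝ} (ha0 : 0 < a) (ha : a < 1/2) {x : ℝ} (hx : 2 ≤ x) :
    (1 - 2*a) * x ^ (2*a - 2) ≤ (x - 1) ^ (2*a - 1) - x ^ (2*a - 1) := by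
  have hx0 : (0:ℝ) < x := by linarith
  have hx1 : (0:ℝ) < 1 - 1/x := by
    have : 1/x ≤ 1/2 := by rw [div_le_div_iff₀ hx0 (by norm_num)]; linarith
    linarith
  have hc0 : (0:ℝ) < 1 - 2*a := by linarith
  have hc1 : 1 - 2*a ≤ 1 := by linarith
  have htx : (1-2*a)/x ≤ 1/2 := by
    rw [div_le_div_iff₀ hx0 (by norm_num)]; nlinarith
  have htx0 : 0 ≤ (1-2*a)/x := by positivity
  -- Bernoulli: (1 - 1/x)^(1-2a) ≤ 1 - (1-2a)/x
  have h3 : (1 - 1/x) ^ (1-2*a) ≤ 1 - (1-2*a)/x := by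
    have := rpow_one_add_le_one_add_mul_self (s := -(1/x)) (p := 1-2*a)
      (by linarith) hc0.le hc1
    rw [show (1:ℝ) + -(1/x) = 1 - 1/x by ring] at this
    calc (1 - 1/x) ^ (1-2*a) ≤ 1 + (1-2*a) * (-(1/x)) := this
      _ = 1 - (1-2*a)/x := by ring
  have h4 : (0:ℝ) < 1 - (1-2*a)/x := by linarith
  have hupos : (0:ℝ) < (1 - 1/x) ^ (1-2*a) := Real.rpow_pos_of_pos hx1 (1-2*a)
  have h5 : (1 - 1/x) ^ (2*a - 1) = ((1 - 1/x) ^ (1-2*a))⁻¹ := by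
    rw [show (2*a - 1 : ℝ) = -(1-2*a) by ring, Real.rpow_neg hx1.le]
  have h6 : (1 - (1-2*a)/x)⁻¹ ≤ (1 - 1/x) ^ (2*a-1) := by
    rw [h5]
    exact inv_anti₀ hupos h3
  have h7 : 1 + (1-2*a)/x ≤ (1 - (1-2*a)/x)⁻¹ := by
    rw [inv_eq_one_div, le_div_iff₀ h4]
    nlinarith [sq_nonneg ((1-2*a)/x)]
  have h8 : 1 + (1-2*a)/x ≤ (1 - 1/x) ^ (2*a-1) := h7.trans h6
  have h9 : x ^ (2*a-2) = x ^ (2*a-1) * x⁻¹ := by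
    rw [show (2*a-2 : ℝ) = (2*a-1) + (-1) by ring, Real.rpow_add hx0, Real.rpow_neg_one]
  have h2 : (x-1) ^ (2*a-1) = x ^ (2*a-1) * (1 - 1/x) ^ (2*a-1) := by
    rw [show x - 1 = x * (1 - 1/x) by field_simp, Real.mul_rpow hx0.le hx1.le]
  have h10 : (0:ℝ) < x ^ (2*a-1) := Real.rpow_pos_of_pos hx0 _
  calc (1 - 2*a) * x ^ (2*a-2) = x ^ (2*a-1) * ((1-2*a)/x) := by
        rw [h9]; field_simp
    _ ≤ x ^ (2*a-1) * ((1 - 1/x) ^ (2*a-1) - 1) :=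
        mul_le_mul_of_nonneg_left (by linarith) h10.le
    _ = (x-1) ^ (2*a-1) - x ^ (2*a-1) := by rw [h2]; ring

private lemma sum_bd {a : ℝ} (ha0 : 0 < a) (ha : a < 1/2) (n : ℕ) (hn : 1 ≤ n) :
    ∑ k ∈ Icc 1 n, (k:ℝ) ^ (2*a - 2) ≤ 1 + (1 - (n:ℝ) ^ (2*a - 1)) / (1 - 2*a) := by
  have hc0 : (0:ℝ) < 1 - 2*a := by linarith
  induction n, hn using Nat.le_induction with
  | base => norm_num
  | succ n hn ih =>
    rw [Finset.sum_Icc_succ_top (by omega : 1 ≤ n + 1)]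
    have hx : (2:ℝ) ≤ ((n+1:ℕ):ℝ) := by
      have : (1:ℝ) ≤ (n:ℝ) := by exact_mod_cast hn
      push_cast; linarith
    have hkey : (1 - 2*a) * (((n+1:ℕ)):ℝ) ^ (2*a-2) ≤
        (((n+1:ℕ):ℝ) - 1) ^ (2*a-1) - ((n+1:ℕ):ℝ) ^ (2*a-1) := key_ineq ha0 ha hx
    push_cast at hkey ⊢
    rw [show (n:ℝ) + 1 - 1 = (n:ℝ) by ring] at hkey
    have hstep : (1 - (n:ℝ)^(2*a-1))/(1-2*a) + ((n:ℝ)+1)^(2*a-2) ≤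
        (1 - ((n:ℝ)+1)^(2*a-1))/(1-2*a) := by
      rw [le_div_iff₀ hc0, add_mul, div_mul_cancel₀ _ hc0.ne']
      nlinarith
    linarith

theorem stmt_3 (γ lam : ℝ) (hγ : 0 < γ) (hlam : 0 < lam) (h1 : γ * lam < 1 / 2)
    (n : ℕ) (hn : 1 ≤ n) :
    γ ^ 2 * ∑ k ∈ Finset.Icc 1 n,
        (1 / (k : ℝ) ^ 2) * ∏ i ∈ Finset.Icc (k + 1) n, (1 - γ * lam / (i : ℝ)) ^ 2 ≤
      (2 * (1 - γ * lam) / (1 - 2 * γ * lam)) * (4 : ℝ) ^ (γ * lam) * γ ^ 2 /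
        (n : ℝ) ^ (2 * γ * lam) := by
  rw [show (2:ℝ) * γ * lam = 2 * (γ * lam) by ring]
  set a := γ * lam with ha_def
  have ha0 : 0 < a := mul_pos hγ hlam
  have ha : a < 1/2 := h1
  have ha1 : a ≤ 1 := by linarith
  have hc0 : (0:ℝ) < 1 - 2*a := by linarith
  have hn0 : (0:ℝ) < (n:ℝ) := by exact_mod_cast hn
  have hnr : (0:ℝ) < (n:ℝ) ^ (2*a) := Real.rpow_pos_of_pos hn0 _
  have h4eq : (4:ℝ) ^ a = (2:ℝ) ^ (2*a) := by
    rw [show (4:ℝ) = (2:ℝ)^(2:ℕ) by norm_num, ← Real.rpow_natCast (2:ℝ) 2,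
        ← Real.rpow_mul (by norm_num : (0:ℝ) ≤ 2)]
    norm_num
  -- summand bound
  have hsummand : ∀ k ∈ Finset.Icc 1 n,
      (1 / (k : ℝ) ^ 2) * ∏ i ∈ Finset.Icc (k + 1) n, (1 - a / (i : ℝ)) ^ 2 ≤
      (4:ℝ) ^ a / (n:ℝ) ^ (2*a) * (k:ℝ) ^ (2*a - 2) := by
    intro k hk
    rw [Finset.mem_Icc] at hk
    obtain ⟨hk1, hkn⟩ := hk
    have hk0 : (0:ℝ) < (k:ℝ) := by exact_mod_cast hk1
    have hprod := prod_bd ha0 ha1 k hk1 n hkn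
    have hprodnn : (0:ℝ) ≤ ∏ i ∈ Finset.Icc (k+1) n, (1 - a/(i:ℝ)) := by
      apply Finset.prod_nonneg
      intro i hi
      rw [Finset.mem_Icc] at hi
      have hi1 : (1:ℝ) ≤ (i:ℝ) := by
        have : 1 ≤ i := by omega
        exact_mod_cast this
      have : a / (i:ℝ) ≤ a := div_le_self ha0.le hi1
      linarith
    have hbnn : (0:ℝ) ≤ ((k:ℝ)+1)/((n:ℝ)+1) := by positivity
    have hsq : ((((k:ℝ)+1)/((n:ℝ)+1)) ^ a) ^ (2:ℕ) = (((k:ℝ)+1)/((n:ℝ)+1)) ^ (2*a) := by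
      rw [← Real.rpow_natCast (((((k:ℝ)+1)/((n:ℝ)+1)) ^ a)) 2, ← Real.rpow_mul hbnn]
      norm_num [mul_comm]
    have hA : ∏ i ∈ Finset.Icc (k+1) n, (1 - a/(i:ℝ))^2 ≤
        (((k:ℝ)+1)/((n:ℝ)+1)) ^ (2*a) := by
      rw [Finset.prod_pow, ← hsq]
      exact pow_le_pow_left₀ hprodnn hprod 2
    have hbase : ((k:ℝ)+1)/((n:ℝ)+1) ≤ 2*(k:ℝ)/(n:ℝ) := by
      rw [div_le_div_iff₀ (by positivity) hn0]
      have hkn' : (k:ℝ) ≤ (n:ℝ) := by exact_mod_cast hkn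
      have hk1' : (1:ℝ) ≤ (k:ℝ) := by exact_mod_cast hk1
      nlinarith [mul_le_mul_of_nonneg_left hk1' hn0.le]
    have hB : (((k:ℝ)+1)/((n:ℝ)+1)) ^ (2*a) ≤ (2*(k:ℝ)/(n:ℝ)) ^ (2*a) :=
      Real.rpow_le_rpow hbnn hbase (by positivity)
    have hC : (2*(k:ℝ)/(n:ℝ)) ^ (2*a) = (2:ℝ)^(2*a) * (k:ℝ)^(2*a) / (n:ℝ)^(2*a) := by
      rw [Real.div_rpow (by positivity) hn0.le, Real.mul_rpow (by norm_num) hk0.le]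
    have hk2 : (k:ℝ)^(2*a-2) = (k:ℝ)^(2*a) / (k:ℝ)^(2:ℕ) := by
      rw [← Real.rpow_natCast (k:ℝ) 2, ← Real.rpow_sub hk0]
      norm_num
    calc (1 / (k : ℝ) ^ 2) * ∏ i ∈ Finset.Icc (k + 1) n, (1 - a / (i : ℝ)) ^ 2
        ≤ (1 / (k : ℝ) ^ 2) * ((((k:ℝ)+1)/((n:ℝ)+1)) ^ (2*a)) :=
          mul_le_mul_of_nonneg_left hA (by positivity)
      _ ≤ (1 / (k : ℝ) ^ 2) * ((2:ℝ)^(2*a) * (k:ℝ)^(2*a) / (n:ℝ)^(2*a)) :=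
          mul_le_mul_of_nonneg_left (hB.trans_eq hC) (by positivity)
      _ = (4:ℝ) ^ a / (n:ℝ) ^ (2*a) * (k:ℝ) ^ (2*a - 2) := by
          rw [h4eq, hk2]
          push_cast
          ring
  have hS : ∑ k ∈ Finset.Icc 1 n, (k:ℝ) ^ (2*a - 2) ≤ 2*(1-a)/(1-2*a) := by
    have h := sum_bd ha0 ha n hn
    have hnn : (0:ℝ) ≤ (n:ℝ)^(2*a-1) := Real.rpow_nonneg hn0.le _
    have e : 2*(1-a)/(1-2*a) = 1 + 1/(1-2*a) := by field_simp; ring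
    have h2 : (1 - (n:ℝ)^(2*a-1))/(1-2*a) ≤ 1/(1-2*a) :=
      (div_le_div_iff_of_pos_right hc0).mpr (by linarith)
    rw [e]
    linarith
  calc γ ^ 2 * ∑ k ∈ Finset.Icc 1 n,
        (1 / (k : ℝ) ^ 2) * ∏ i ∈ Finset.Icc (k + 1) n, (1 - a / (i : ℝ)) ^ 2
      ≤ γ ^ 2 * ∑ k ∈ Finset.Icc 1 n, ((4:ℝ) ^ a / (n:ℝ) ^ (2*a) * (k:ℝ) ^ (2*a - 2)) :=
        mul_le_mul_of_nonneg_left (Finset.sum_le_sum hsummand) (sq_nonneg γ)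
    _ = γ ^ 2 * ((4:ℝ) ^ a / (n:ℝ) ^ (2*a) * ∑ k ∈ Finset.Icc 1 n, (k:ℝ) ^ (2*a - 2)) := by
        rw [← Finset.mul_sum]
    _ ≤ γ ^ 2 * ((4:ℝ) ^ a / (n:ℝ) ^ (2*a) * (2*(1-a)/(1-2*a))) := by
        apply mul_le_mul_of_nonneg_left _ (sq_nonneg γ)
        exact mul_le_mul_of_nonneg_left hS (by positivity)
    _ = 2 * (1 - a) / (1 - 2 * a) * (4:ℝ) ^ a * γ ^ 2 / (n:ℝ) ^ (2*a) := by ring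
end

section
/- Let γ, λ > 0 with γλ < 1, α ∈ [0,1], γ_k = γ/k^α, and for k ≤ n define a_k = γ_k ∏_{i=k+1}^n (1 − γ_i λ). Then sup_{1 ≤ k ≤ n} a_k = max{a_1, a_n}. In particular, for α = 1 the sequence (a_k) is non-increasing so the sup equals a_1 = (γ/(1−γλ))·∏_{i=1}^n(1−γλ/i), and for α = 0 it is increasing so the sup equals a_n = γ. -/
lemma aux_concave (α : ℝ) (h0 : 0 ≤ α) (h1 : α ≤ 1) (x : ℝ) (hx : 0 ≤ x) :
    (x + 2) ^ α + x ^ α ≤ 2 * (x + 1) ^ α := by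
  have h := (Real.concaveOn_rpow h0 h1).2 (Set.mem_Ici.2 hx)
    (Set.mem_Ici.2 (by linarith : (0:ℝ) ≤ x + 2)) (by norm_num : (0:ℝ) ≤ (1:ℝ)/2)
    (by norm_num : (0:ℝ) ≤ (1:ℝ)/2) (by norm_num)
  simp only [smul_eq_mul] at h
  have e : (1:ℝ)/2 * x + 1/2 * (x + 2) = x + 1 := by ring
  rw [e] at h
  linarith

theorem stmt_6 (γ lam α : ℝ) (hγ : 0 < γ) (hlam : 0 < lam) (h1 : γ * lam < 1)
    (hα : α ∈ Set.Icc (0 : ℝ) 1) (n : ℕ) (hn : 1 ≤ n)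
    (a : ℕ → ℝ)
    (ha : ∀ k, a k = γ / (k : ℝ) ^ α * ∏ i ∈ Finset.Icc (k + 1) n, (1 - γ / (i : ℝ) ^ α * lam)) :
    (∀ k, 1 ≤ k → k ≤ n → a k ≤ max (a 1) (a n)) ∧
      (α = 1 → (∀ k, 1 ≤ k → k ≤ n → a k ≤ a 1) ∧
        a 1 = γ / (1 - γ * lam) * ∏ i ∈ Finset.Icc 1 n, (1 - γ * lam / (i : ℝ))) ∧
      (α = 0 → (∀ k, 1 ≤ k → k ≤ n → a k ≤ a n) ∧ a n = γ) := by
  obtain ⟨hα0, hα1⟩ := hα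
  have hc : 0 < γ * lam := mul_pos hγ hlam
  -- powers of naturals ≥ 1
  have hpow1 : ∀ i : ℕ, 1 ≤ i → (1:ℝ) ≤ (i:ℝ) ^ α := by
    intro i hi
    calc (1:ℝ) = (1:ℝ) ^ α := (Real.one_rpow α).symm
    _ ≤ (i:ℝ) ^ α := Real.rpow_le_rpow zero_le_one (by exact_mod_cast hi) hα0
  have hpowpos : ∀ i : ℕ, 1 ≤ i → (0:ℝ) < (i:ℝ) ^ α := fun i hi =>
    lt_of_lt_of_le one_pos (hpow1 i hi)
  -- factor positivity
  have hfac : ∀ i : ℕ, 1 ≤ i → 0 < 1 - γ / (i:ℝ) ^ α * lam := by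
    intro i hi
    have h2 : γ / (i:ℝ) ^ α ≤ γ := div_le_self hγ.le (hpow1 i hi)
    have h3 : γ / (i:ℝ) ^ α * lam ≤ γ * lam :=
      mul_le_mul_of_nonneg_right h2 hlam.le
    linarith
  -- positivity of a
  have hapos : ∀ k : ℕ, 1 ≤ k → 0 < a k := by
    intro k hk
    rw [ha k]
    have hp : 0 < ∏ i ∈ Finset.Icc (k + 1) n, (1 - γ / (i : ℝ) ^ α * lam) := by
      apply Finset.prod_pos
      intro i hi
      exact hfac i (le_trans (Nat.le_add_left 1 k) (Finset.mem_Icc.1 hi).1)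
    exact mul_pos (div_pos hγ (hpowpos k hk)) hp
  -- recurrence: a k = ((k+1)^α - γ*lam)/k^α * a (k+1)
  have hrec : ∀ k : ℕ, 1 ≤ k → k < n →
      a k = (((k:ℝ) + 1) ^ α - γ * lam) / (k:ℝ) ^ α * a (k + 1) := by
    intro k hk hkn
    have hsplit : ∏ i ∈ Finset.Icc (k + 1) n, (1 - γ / (i : ℝ) ^ α * lam)
        = (1 - γ / ((k+1 : ℕ):ℝ) ^ α * lam) *
          ∏ i ∈ Finset.Icc (k + 2) n, (1 - γ / (i : ℝ) ^ α * lam) := by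
      rw [← Finset.Ico_add_one_right_eq_Icc, ← Finset.Ico_add_one_right_eq_Icc]
      exact Finset.prod_eq_prod_Ico_succ_bot (by omega) _
    rw [ha k, ha (k+1), hsplit]
    have hk1 : (0:ℝ) < ((k+1:ℕ):ℝ) ^ α := hpowpos (k+1) (by omega)
    have hkp : (0:ℝ) < (k:ℝ) ^ α := hpowpos k hk
    have hcast : ((k+1:ℕ):ℝ) = (k:ℝ) + 1 := by push_cast; ring
    rw [hcast] at hk1 ⊢
    field_simp
  -- D k := (k+1)^α - k^α ; step comparisons
  have hstep_ge : ∀ k : ℕ, 1 ≤ k → k < n →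
      γ * lam ≤ ((k:ℝ) + 1) ^ α - (k:ℝ) ^ α → a (k + 1) ≤ a k := by
    intro k hk hkn hD
    rw [hrec k hk hkn]
    have hkp : (0:ℝ) < (k:ℝ) ^ α := hpowpos k hk
    have hR : 1 ≤ (((k:ℝ) + 1) ^ α - γ * lam) / (k:ℝ) ^ α := by
      rw [le_div_iff₀ hkp]; linarith
    nlinarith [hapos (k+1) (by omega)]
  have hstep_le : ∀ k : ℕ, 1 ≤ k → k < n →
      ((k:ℝ) + 1) ^ α - (k:ℝ) ^ α ≤ γ * lam → a k ≤ a (k + 1) := by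
    intro k hk hkn hD
    rw [hrec k hk hkn]
    have hkp : (0:ℝ) < (k:ℝ) ^ α := hpowpos k hk
    have hR : (((k:ℝ) + 1) ^ α - γ * lam) / (k:ℝ) ^ α ≤ 1 := by
      rw [div_le_one hkp]; linarith
    nlinarith [hapos (k+1) (by omega)]
  -- antitonicity of D
  have hDanti : ∀ j k : ℕ, j ≤ k →
      ((k:ℝ) + 1) ^ α - (k:ℝ) ^ α ≤ ((j:ℝ) + 1) ^ α - (j:ℝ) ^ α := by
    intro j k hjk
    induction k, hjk using Nat.le_induction with
    | base => exact le_refl _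
    | succ m hm ih =>
      have h := aux_concave α hα0 hα1 (m:ℝ) (Nat.cast_nonneg m)
      push_cast
      push_cast at ih
      have e2 : ((m:ℝ) + 1 + 1) = (m:ℝ) + 2 := by ring
      rw [e2]
      linarith
  -- upward chain: if all earlier steps are decreasing, a k ≤ a 1
  have hup : ∀ k : ℕ, 1 ≤ k → k ≤ n →
      (∀ j : ℕ, 1 ≤ j → j < k → γ * lam ≤ ((j:ℝ) + 1) ^ α - (j:ℝ) ^ α) → a k ≤ a 1 := by
    intro k hk
    induction k, hk using Nat.le_induction with
    | base => intro _ _; exact le_refl _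
    | succ m hm ih =>
      intro hmn hall
      have h1' : a (m + 1) ≤ a m :=
        hstep_ge m hm (by omega) (hall m hm (by omega))
      exact le_trans h1' (ih (by omega) (fun j hj hjm => hall j hj (by omega)))
  -- downward chain: if D j0 < γλ with j0 ≤ k, then a k ≤ a n
  have hdown : ∀ j0 : ℕ, 1 ≤ j0 → (((j0:ℝ) + 1) ^ α - (j0:ℝ) ^ α < γ * lam) →
      ∀ t k : ℕ, j0 ≤ k → k + t = n → a k ≤ a n := by
    intro j0 hj0 hDj0 t
    induction t with
    | zero => intro k _ hk; simp at hk; rw [hk]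
    | succ s ih =>
      intro k hk hkn
      have h1' : a k ≤ a (k + 1) := by
        apply hstep_le k (le_trans hj0 hk) (by omega)
        exact le_of_lt (lt_of_le_of_lt (hDanti j0 k hk) hDj0)
      exact le_trans h1' (ih (k+1) (by omega) (by omega))
  -- main part
  refine ⟨?_, ?_, ?_⟩
  · intro k hk hkn
    by_cases hall : ∀ j : ℕ, 1 ≤ j → j < k → γ * lam ≤ ((j:ℝ) + 1) ^ α - (j:ℝ) ^ α
    · exact le_trans (hup k hk hkn hall) (le_max_left _ _)
    · push_neg at hall
      obtain ⟨j, hj1, hjk, hjD⟩ := hall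
      exact le_trans (hdown j hj1 hjD (n - k) k (by omega) (by omega)) (le_max_right _ _)
  · intro hα1'
    subst hα1'
    constructor
    · intro k hk hkn
      apply hup k hk hkn
      intro j hj _
      have : ((j:ℝ) + 1) ^ (1:ℝ) - (j:ℝ) ^ (1:ℝ) = 1 := by
        rw [Real.rpow_one, Real.rpow_one]; ring
      rw [this]; exact h1.le
    · rw [ha 1]
      have hsplit : ∏ i ∈ Finset.Icc 1 n, (1 - γ * lam / (i : ℝ))
          = (1 - γ * lam / ((1:ℕ):ℝ)) * ∏ i ∈ Finset.Icc 2 n, (1 - γ * lam / (i : ℝ)) := by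
        rw [← Finset.Ico_add_one_right_eq_Icc, ← Finset.Ico_add_one_right_eq_Icc]
        exact Finset.prod_eq_prod_Ico_succ_bot (by omega) _
      rw [hsplit]
      have hprod : ∏ i ∈ Finset.Icc (1 + 1) n, (1 - γ / (i : ℝ) ^ (1:ℝ) * lam)
          = ∏ i ∈ Finset.Icc 2 n, (1 - γ * lam / (i : ℝ)) := by
        apply Finset.prod_congr rfl
        intro i hi
        have hi2 : 2 ≤ i := (Finset.mem_Icc.1 hi).1
        have hip : (0:ℝ) < (i:ℝ) := by exact_mod_cast Nat.lt_of_lt_of_le Nat.zero_lt_two hi2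
        rw [Real.rpow_one]
        field_simp
      rw [hprod]
      have h1ne : (1:ℝ) - γ * lam ≠ 0 := by linarith
      simp only [Nat.cast_one, Real.one_rpow]
      field_simp
  · intro hα0'
    subst hα0'
    have hDn : ∀ j : ℕ, ((j:ℝ) + 1) ^ (0:ℝ) - (j:ℝ) ^ (0:ℝ) < γ * lam := by
      intro j
      rw [Real.rpow_zero, Real.rpow_zero]
      simpa using hc
    have han : a n = γ := by
      rw [ha n]
      rw [Finset.Icc_eq_empty (by omega)]
      simp [Real.rpow_zero]
    refine ⟨?_, han⟩
    intro k hk hkn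
    exact hdown 1 le_rfl (hDn 1) (n - k) k hk (by omega)
end

section
/- Let λ > 0, γ_k > 0 decreasing, and set P(k,n) = ∏_{i=k+1}^n (1 − γ_i λ)² (assuming γ_i λ < 1 for all i). Then for any 1 ≤ m ≤ n: ∑_{k=1}^n γ_k² P(k,n) ≤ (∑_{k=1}^n γ_k²)·exp(−2λ ∑_{i=m+1}^n γ_i) + γ_m/λ. -/
open Finset

private lemma tele_aux (lam : ℝ) (γ : ℕ → ℝ)
    (hpos : ∀ i, 0 < γ i) (hlam : 0 < lam) (hsmall : ∀ i, γ i * lam < 1) (m : ℕ) :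
    ∀ n, m ≤ n →
      ∑ k ∈ Finset.Ioc m n, (lam * γ k) * ∏ i ∈ Finset.Icc (k + 1) n, (1 - γ i * lam) ^ 2 ≤ 1 := by
  intro n hn
  induction n, hn using Nat.le_induction with
  | base => simp
  | succ n hn ih =>
    have h1 : ∀ i, (0:ℝ) ≤ 1 - γ i * lam := fun i => by linarith [hsmall i]
    have hS0 : 0 ≤ ∑ k ∈ Finset.Ioc m n, (lam * γ k) * ∏ i ∈ Finset.Icc (k + 1) n, (1 - γ i * lam) ^ 2 := by
      apply Finset.sum_nonneg
      intro k _
      have := (hpos k).le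
      positivity
    rw [Finset.sum_Ioc_succ_top hn]
    have hrw : ∀ k ∈ Finset.Ioc m n,
        (lam * γ k) * ∏ i ∈ Finset.Icc (k + 1) (n+1), (1 - γ i * lam) ^ 2
        = ((lam * γ k) * ∏ i ∈ Finset.Icc (k + 1) n, (1 - γ i * lam) ^ 2) * (1 - γ (n+1) * lam) ^ 2 := by
      intro k hk
      have hk' : k + 1 ≤ n + 1 := by
        have := (Finset.mem_Ioc.mp hk).2; omega
      rw [Finset.prod_Icc_succ_top hk']
      ring
    rw [Finset.sum_congr rfl hrw, ← Finset.sum_mul]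
    have hIcc : Finset.Icc (n+1+1) (n+1) = ∅ := by
      apply Finset.Icc_eq_empty; omega
    rw [hIcc]
    simp only [Finset.prod_empty, mul_one]
    set S := ∑ k ∈ Finset.Ioc m n, (lam * γ k) * ∏ i ∈ Finset.Icc (k + 1) n, (1 - γ i * lam) ^ 2
    have ha := hsmall (n+1)
    have ha0 := hpos (n+1)
    have hc0 : (0:ℝ) ≤ (1 - γ (n+1) * lam) ^ 2 := sq_nonneg _
    have hSc : S * (1 - γ (n+1) * lam) ^ 2 ≤ (1 - γ (n+1) * lam) ^ 2 :=
      mul_le_of_le_one_left hc0 ih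
    nlinarith [mul_nonneg (mul_nonneg ha0.le hlam.le) (h1 (n+1))]

theorem stmt_7 (lam : ℝ) (hlam : 0 < lam) (γ : ℕ → ℝ)
    (hpos : ∀ i, 0 < γ i) (hdec : ∀ i j, i ≤ j → γ j ≤ γ i)
    (hsmall : ∀ i, γ i * lam < 1) (n m : ℕ) (hm1 : 1 ≤ m) (hmn : m ≤ n) :
    ∑ k ∈ Finset.Icc 1 n, γ k ^ 2 * ∏ i ∈ Finset.Icc (k + 1) n, (1 - γ i * lam) ^ 2 ≤
      (∑ k ∈ Finset.Icc 1 n, γ k ^ 2) *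
          Real.exp (-2 * lam * ∑ i ∈ Finset.Icc (m + 1) n, γ i) +
        γ m / lam := by
  have h1 : ∀ i, (0:ℝ) ≤ 1 - γ i * lam := fun i => by linarith [hsmall i]
  set E : ℝ := Real.exp (-2 * lam * ∑ i ∈ Finset.Icc (m + 1) n, γ i) with hE
  -- key: for k ≤ m, the product is ≤ E
  have hprodE : ∀ k, k ≤ m →
      ∏ i ∈ Finset.Icc (k + 1) n, (1 - γ i * lam) ^ 2 ≤ E := by
    intro k hk
    have step1 : ∏ i ∈ Finset.Icc (k + 1) n, (1 - γ i * lam) ^ 2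
        ≤ ∏ i ∈ Finset.Icc (m + 1) n, (1 - γ i * lam) ^ 2 := by
      have hcons : (∏ i ∈ Finset.Ioc k m, (1 - γ i * lam) ^ 2) *
          ∏ i ∈ Finset.Ioc m n, (1 - γ i * lam) ^ 2
          = ∏ i ∈ Finset.Ioc k n, (1 - γ i * lam) ^ 2 :=
        Finset.prod_Ioc_consecutive _ hk hmn
      have hone : (∏ i ∈ Finset.Ioc k m, (1 - γ i * lam) ^ 2) ≤ 1 := by
        apply Finset.prod_le_one
        · intro i _; positivity
        · intro i _; nlinarith [h1 i, hsmall i, mul_pos (hpos i) hlam]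
      have hpos2 : (0:ℝ) ≤ ∏ i ∈ Finset.Ioc m n, (1 - γ i * lam) ^ 2 := by positivity
      rw [show Finset.Icc (k+1) n = Finset.Ioc k n from Finset.Icc_add_one_left_eq_Ioc k n,
        show Finset.Icc (m+1) n = Finset.Ioc m n from Finset.Icc_add_one_left_eq_Ioc m n]
      nlinarith
    have step2 : ∏ i ∈ Finset.Icc (m + 1) n, (1 - γ i * lam) ^ 2
        ≤ ∏ i ∈ Finset.Icc (m + 1) n, Real.exp (-2 * lam * γ i) := by
      apply Finset.prod_le_prod
      · intro i _; positivity
      · intro i _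
        have : 1 - γ i * lam ≤ Real.exp (-(γ i * lam)) := by
          linarith [Real.add_one_le_exp (-(γ i * lam))]
        calc (1 - γ i * lam) ^ 2 ≤ Real.exp (-(γ i * lam)) ^ 2 := by
              apply sq_le_sq' <;> nlinarith [Real.exp_pos (-(γ i * lam)), h1 i]
          _ = Real.exp (-2 * lam * γ i) := by
              rw [← Real.exp_nat_mul]
              · ring_nf
              
    calc _ ≤ _ := step1
      _ ≤ _ := step2
      _ = E := by
          rw [← Real.exp_sum, hE, Finset.mul_sum]
  -- split the sum
  have hsplit : Finset.Icc 1 n = Finset.Ioc 0 n := by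
    rw [← Finset.Icc_add_one_left_eq_Ioc]; rfl
  have hsplit2 : Finset.Icc (m+1) n = Finset.Ioc m n := by
    rw [← Finset.Icc_add_one_left_eq_Ioc]
  have hunion : ∑ k ∈ Finset.Ioc 0 m, γ k ^ 2 * ∏ i ∈ Finset.Icc (k + 1) n, (1 - γ i * lam) ^ 2
      + ∑ k ∈ Finset.Ioc m n, γ k ^ 2 * ∏ i ∈ Finset.Icc (k + 1) n, (1 - γ i * lam) ^ 2
      = ∑ k ∈ Finset.Ioc 0 n, γ k ^ 2 * ∏ i ∈ Finset.Icc (k + 1) n, (1 - γ i * lam) ^ 2 :=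
    Finset.sum_Ioc_consecutive _ (Nat.zero_le m) hmn
  rw [hsplit, ← hunion]
  -- part 1
  have part1 : ∑ k ∈ Finset.Ioc 0 m, γ k ^ 2 * ∏ i ∈ Finset.Icc (k + 1) n, (1 - γ i * lam) ^ 2
      ≤ (∑ k ∈ Finset.Ioc 0 n, γ k ^ 2) * E := by
    calc ∑ k ∈ Finset.Ioc 0 m, γ k ^ 2 * ∏ i ∈ Finset.Icc (k + 1) n, (1 - γ i * lam) ^ 2
        ≤ ∑ k ∈ Finset.Ioc 0 m, γ k ^ 2 * E := by
          apply Finset.sum_le_sum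
          intro k hk
          have hkm := (Finset.mem_Ioc.mp hk).2
          have := hprodE k hkm
          nlinarith [sq_nonneg (γ k)]
      _ ≤ ∑ k ∈ Finset.Ioc 0 n, γ k ^ 2 * E := by
          apply Finset.sum_le_sum_of_subset_of_nonneg
          · apply Finset.Ioc_subset_Ioc_right hmn
          · intro k _ _
            have := Real.exp_pos (-2 * lam * ∑ i ∈ Finset.Icc (m + 1) n, γ i)
            rw [hE]; positivity
      _ = (∑ k ∈ Finset.Ioc 0 n, γ k ^ 2) * E := by rw [Finset.sum_mul]
  -- part 2
  have part2 : ∑ k ∈ Finset.Ioc m n, γ k ^ 2 * ∏ i ∈ Finset.Icc (k + 1) n, (1 - γ i * lam) ^ 2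
      ≤ γ m / lam := by
    have tele := tele_aux lam γ hpos hlam hsmall m n hmn
    calc ∑ k ∈ Finset.Ioc m n, γ k ^ 2 * ∏ i ∈ Finset.Icc (k + 1) n, (1 - γ i * lam) ^ 2
        ≤ ∑ k ∈ Finset.Ioc m n, (γ m / lam) * ((lam * γ k) * ∏ i ∈ Finset.Icc (k + 1) n, (1 - γ i * lam) ^ 2) := by
          apply Finset.sum_le_sum
          intro k hk
          have hkm := (Finset.mem_Ioc.mp hk).1
          have hγ : γ k ≤ γ m := hdec m k (le_of_lt hkm)
          have hP : (0:ℝ) ≤ ∏ i ∈ Finset.Icc (k + 1) n, (1 - γ i * lam) ^ 2 := by positivity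
          have : γ k ^ 2 ≤ (γ m / lam) * (lam * γ k) := by
            rw [div_mul_eq_mul_div, mul_comm lam (γ k), ← mul_assoc, mul_div_assoc,
              div_self (ne_of_gt hlam), mul_one]
            nlinarith [hpos k, hpos m]
          nlinarith
      _ = (γ m / lam) * ∑ k ∈ Finset.Ioc m n, (lam * γ k) * ∏ i ∈ Finset.Icc (k + 1) n, (1 - γ i * lam) ^ 2 := by
          rw [Finset.mul_sum]
      _ ≤ (γ m / lam) * 1 := by
          apply mul_le_mul_of_nonneg_left tele
          have := (hpos m).le
          positivity
      _ = γ m / lam := mul_one _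
  linarith
end

section
/- With Σ, g, A(λ) as above and g_λ = (Σ + λI)^{−1}Σ g, one has ‖g_λ − g‖ ≤ sqrt(√λ·‖g‖² + A(√λ)) for every λ > 0. -/
lemma aux_sum_sq {H : Type*} [NormedAddCommGroup H] [InnerProductSpace ℝ H] [CompleteSpace H]
    (u : HilbertBasis ℕ ℝ H) (x : H) :
    Summable (fun j => (inner ℝ x (u j) : ℝ) ^ 2) ∧
      (∑' j, (inner ℝ x (u j) : ℝ) ^ 2) = ‖x‖ ^ 2 := by
  have hs := u.summable_inner_mul_inner x x
  have heq : (fun j => (inner ℝ x (u j) : ℝ) * inner ℝ (u j) x) =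
      fun j => (inner ℝ x (u j) : ℝ) ^ 2 := by
    funext j; rw [real_inner_comm (u j) x]; ring
  constructor
  · rw [← heq]; exact hs
  · have := u.tsum_inner_mul_inner x x
    rw [heq] at this
    rw [this, real_inner_self_eq_norm_sq]

/-- Bound on the approximation error `‖g_λ − g‖` where `g_λ = (Σ + λI)⁻¹ Σ g`,
in terms of `√λ‖g‖²` and the spectral tail `A(√λ)`. -/
theorem stmt_13 {H : Type*} [NormedAddCommGroup H] [InnerProductSpace ℝ H] [CompleteSpace H]
    (u : HilbertBasis ℕ ℝ H) (σ : ℕ → ℝ) (hσpos : ∀ j, 0 ≤ σ j) (hσsum : Summable σ)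
    (Sop : H →L[ℝ] H) (hSsa : IsSelfAdjoint Sop) (heig : ∀ j, Sop (u j) = σ j • u j)
    (lam : ℝ) (hlam : 0 < lam) (g glam : H)
    (hglam : Sop glam + lam • glam = Sop g) :
    ‖glam - g‖ ≤ Real.sqrt (Real.sqrt lam * ‖g‖ ^ 2 +
      ∑' j, if σ j ≤ Real.sqrt lam then (inner ℝ g (u j) : ℝ) ^ 2 else 0) := by
  set c : ℕ → ℝ := fun j => inner ℝ g (u j) with hc
  have hsym := hSsa.isSymmetric
  have hden : ∀ j, 0 < σ j + lam := fun j => by linarith [hσpos j]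
  have key : ∀ j, (σ j + lam) * (inner ℝ glam (u j) : ℝ) = σ j * c j := by
    intro j
    have h1 : (inner ℝ (Sop glam + lam • glam) (u j) : ℝ) = inner ℝ (Sop g) (u j) := by rw [hglam]
    rw [inner_add_left, real_inner_smul_left] at h1
    have h2 : (inner ℝ (Sop glam) (u j) : ℝ) = σ j * inner ℝ glam (u j) := by
      have hh := hsym glam (u j)
      simp only [ContinuousLinearMap.coe_coe] at hh
      rw [hh, heig, real_inner_smul_right]
    have h3 : (inner ℝ (Sop g) (u j) : ℝ) = σ j * c j := by
      have hh := hsym g (u j)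
      simp only [ContinuousLinearMap.coe_coe] at hh
      rw [hh, heig, real_inner_smul_right]
    rw [h2, h3] at h1
    ring_nf
    ring_nf at h1
    linarith
  have coord : ∀ j, (inner ℝ (glam - g) (u j) : ℝ) = -(lam * c j) / (σ j + lam) := by
    intro j
    rw [inner_sub_left]
    have hk := key j
    have hne := (hden j).ne'
    field_simp
    linarith [hk]
  obtain ⟨hsumd, hnormd⟩ := aux_sum_sq u (glam - g)
  obtain ⟨hsumg, hnormg⟩ := aux_sum_sq u g
  set b : ℕ → ℝ := fun j =>
    (if σ j ≤ Real.sqrt lam then c j ^ 2 else 0) + Real.sqrt lam * c j ^ 2 with hb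
  have hsl : 0 < Real.sqrt lam := Real.sqrt_pos.mpr hlam
  have hbound : ∀ j, (inner ℝ (glam - g) (u j) : ℝ) ^ 2 ≤ b j := by
    intro j
    rw [coord j, hb]
    have hd := hden j
    set t : ℝ := lam / (σ j + lam) with ht
    have h0t : 0 < t := div_pos hlam hd
    have ht1 : t ≤ 1 := by rw [div_le_one hd]; linarith [hσpos j]
    have h1 : (-(lam * c j) / (σ j + lam)) ^ 2 = t ^ 2 * c j ^ 2 := by
      rw [ht]; field_simp
    rw [h1]
    have h2 : t ^ 2 * c j ^ 2 ≤ t * c j ^ 2 := by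
      nlinarith [sq_nonneg (c j)]
    by_cases hcase : σ j ≤ Real.sqrt lam
    · simp only [hcase, if_true]
      nlinarith [sq_nonneg (c j)]
    · simp only [hcase, if_false]
      push_neg at hcase
      have hts : t ≤ Real.sqrt lam := by
        rw [ht, div_le_iff₀ hd]
        have hll : lam = Real.sqrt lam * Real.sqrt lam := (Real.mul_self_sqrt hlam.le).symm
        nlinarith
      nlinarith [sq_nonneg (c j)]
  have hsum_if : Summable (fun j => if σ j ≤ Real.sqrt lam then c j ^ 2 else 0) := by
    apply Summable.of_nonneg_of_le (fun j => by positivity) (fun j => ?_) hsumg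
    split <;> [exact le_refl _; positivity]
  have hsumb : Summable b := hsum_if.add (hsumg.mul_left _)
  have htle : ‖glam - g‖ ^ 2 ≤ Real.sqrt lam * ‖g‖ ^ 2 +
      ∑' j, if σ j ≤ Real.sqrt lam then c j ^ 2 else 0 := by
    rw [← hnormd]
    calc ∑' j, (inner ℝ (glam - g) (u j) : ℝ) ^ 2 ≤ ∑' j, b j :=
          Summable.tsum_le_tsum hbound hsumd hsumb
      _ = (∑' j, if σ j ≤ Real.sqrt lam then c j ^ 2 else 0) +
            ∑' j, Real.sqrt lam * c j ^ 2 := Summable.tsum_add hsum_if (hsumg.mul_left _)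
      _ = (∑' j, if σ j ≤ Real.sqrt lam then c j ^ 2 else 0) + Real.sqrt lam * ‖g‖ ^ 2 := by
          rw [tsum_mul_left, hnormg]
      _ = _ := add_comm _ _
  calc ‖glam - g‖ = Real.sqrt (‖glam - g‖ ^ 2) := by rw [Real.sqrt_sq (norm_nonneg _)]
    _ ≤ _ := Real.sqrt_le_sqrt htle
end

section
/- Let λ > 0 and Σ a positive self-adjoint operator with eigenvalues σ_j ≤ C/j^β for some β > 1 and C > 0. Then tr(Σ(Σ + λI)^{−2}) ≤ c_β · λ^{−1−1/β} for a constant c_β depending only on β and C; in particular, when σ_j ≤ 1/j^β, tr(Σ(Σ+λI)^{−2}) ≤ (β/(β−1))·λ^{−(1+1/β)}. -/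
open MeasureTheory Set Finset

-- sum of min bound
lemma sum_min_le (β : ℝ) (hβ : 1 < β) (lam : ℝ) (hlam : 0 < lam) :
    ∑' j : ℕ, min lam (((j : ℝ) + 1) ^ (-β)) ≤
      lam * lam ^ (-(1/β)) + (lam ^ (-(1/β))) ^ (1 - β) / (β - 1) := by
  set t : ℝ := lam ^ (-(1/β)) with ht
  have htpos : 0 < t := Real.rpow_pos_of_pos hlam _
  set f : ℝ → ℝ := fun x => if x ≤ 0 then lam else min lam (x ^ (-β)) with hf
  have hfm : Measurable f := by
    apply Measurable.ite (measurableSet_le measurable_id measurable_const)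
      measurable_const
    exact measurable_const.min (measurable_id.pow_const (-β))
  have hfnonneg : ∀ x, 0 ≤ f x := by
    intro x
    simp only [hf]
    split
    · exact hlam.le
    · exact le_min hlam.le (Real.rpow_nonneg (by linarith [not_le.mp (by assumption)]) _)
  have hfle : ∀ x, f x ≤ lam := by
    intro x; simp only [hf]; split
    · exact le_rfl
    · exact min_le_left _ _
  have hanti : Antitone f := by
    intro x y hxy
    simp only [hf]
    by_cases hy : y ≤ 0
    · rw [if_pos (hxy.trans hy), if_pos hy]
    · rw [if_neg hy]
      by_cases hx : x ≤ 0
      · rw [if_pos hx]; exact min_le_left _ _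
      · rw [if_neg hx]
        exact min_le_min le_rfl
          (Real.rpow_le_rpow_of_nonpos (not_le.mp hx) hxy (by linarith))
  -- integrability on Ioi 0
  have hint1 : IntegrableOn f (Ioc 0 t) := by
    apply Measure.integrableOn_of_bounded (by simp) hfm.aestronglyMeasurable
    filter_upwards with x
    rw [Real.norm_eq_abs, abs_of_nonneg (hfnonneg x)]
    exact hfle x
  have hint2 : IntegrableOn f (Ioi t) := by
    apply Integrable.mono (integrableOn_Ioi_rpow_of_lt (by linarith : -β < -1) htpos)
      hfm.aestronglyMeasurable
    filter_upwards [ae_restrict_mem measurableSet_Ioi] with x hx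
    rw [Real.norm_eq_abs, Real.norm_eq_abs, abs_of_nonneg (hfnonneg x),
      abs_of_nonneg (Real.rpow_nonneg (le_of_lt (htpos.trans hx)) _)]
    simp only [hf, if_neg (not_le.mpr (htpos.trans hx))]
    exact min_le_right _ _
  have hunion : Ioc 0 t ∪ Ioi t = Ioi (0:ℝ) := Ioc_union_Ioi_eq_Ioi htpos.le
  have hintIoi : IntegrableOn f (Ioi 0) := by
    rw [← hunion]; exact hint1.union hint2
  -- value bound for integral over Ioi 0
  have hI1 : ∫ x in Ioc 0 t, f x ≤ lam * t := by
    have : ∫ x in Ioc 0 t, f x ≤ ∫ _ in Ioc 0 t, lam := by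
      apply setIntegral_mono_on hint1 ((integrableOn_const_iff (C := lam) (by simp)).mpr (Or.inr (by simp)))
        measurableSet_Ioc
      intro x _; exact hfle x
    apply this.trans
    rw [setIntegral_const]
    simp [Real.volume_Ioc, ENNReal.toReal_ofReal htpos.le, mul_comm, max_eq_left htpos.le]
  have hI2 : ∫ x in Ioi t, f x ≤ t ^ (1 - β) / (β - 1) := by
    have h1 : ∫ x in Ioi t, f x ≤ ∫ x in Ioi t, x ^ (-β) := by
      apply setIntegral_mono_on hint2
        (integrableOn_Ioi_rpow_of_lt (by linarith : -β < -1) htpos) measurableSet_Ioi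
      intro x hx
      simp only [hf, if_neg (not_le.mpr (htpos.trans hx))]
      exact min_le_right _ _
    apply h1.trans
    rw [integral_Ioi_rpow_of_lt (by linarith : -β < -1) htpos]
    have hb : (β - 1 : ℝ) ≠ 0 := by linarith
    have hb2 : (-β + 1 : ℝ) ≠ 0 := by intro h; apply hb; linarith
    rw [show (-β + 1 : ℝ) = 1 - β by ring] at hb2 ⊢
    have : -t ^ (1 - β) / (1 - β) = t ^ (1 - β) / (β - 1) := by
      field_simp
      ring
    rw [this]
  have hItot : ∫ x in Ioi (0:ℝ), f x ≤ lam * t + t ^ (1 - β) / (β - 1) := by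
    rw [← hunion, setIntegral_union (Ioc_disjoint_Ioi le_rfl) measurableSet_Ioi hint1 hint2]
    exact add_le_add hI1 hI2
  -- finite sums
  apply Real.tsum_le_of_sum_range_le
  · intro n
    exact le_min hlam.le (Real.rpow_nonneg (by positivity) _)
  intro n
  have hsum : ∑ i ∈ Finset.range n, f ((0:ℝ) + (i + 1 : ℕ)) ≤ ∫ x in (0:ℝ)..(0 + n), f x :=
    AntitoneOn.sum_le_integral (hanti.antitoneOn _)
  have heq : ∀ i : ℕ, f ((0:ℝ) + (i + 1 : ℕ)) = min lam (((i:ℝ) + 1) ^ (-β)) := by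
    intro i
    simp only [hf, zero_add, Nat.cast_add, Nat.cast_one]
    rw [if_neg (by rw [not_le]; positivity)]
  calc ∑ i ∈ Finset.range n, min lam (((i:ℝ) + 1) ^ (-β))
      = ∑ i ∈ Finset.range n, f ((0:ℝ) + (i + 1 : ℕ)) := by
        exact Finset.sum_congr rfl fun i _ => (heq i).symm
    _ ≤ ∫ x in (0:ℝ)..(0 + n), f x := hsum
    _ ≤ ∫ x in Ioi (0:ℝ), f x := by
        rw [zero_add, intervalIntegral.integral_of_le (by positivity)]
        apply setIntegral_mono_set hintIoi
        · filter_upwards with x; exact hfnonneg x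
        · filter_upwards with x hx; exact hx.1
    _ ≤ lam * t + t ^ (1 - β) / (β - 1) := hItot

-- main C=1 lemma
lemma key (β : ℝ) (hβ : 1 < β) (lam : ℝ) (hlam : 0 < lam) (σ : ℕ → ℝ)
    (hσ0 : ∀ j, 0 ≤ σ j) (hσ : ∀ j : ℕ, σ j ≤ 1 / ((j : ℝ) + 1) ^ β) :
    ∑' j, σ j / (σ j + lam) ^ 2 ≤ β / (β - 1) * lam ^ (-(1 + 1 / β)) := by
  have hβ0 : (0:ℝ) < β := by linarith
  -- termwise bound
  have hterm : ∀ j : ℕ, σ j / (σ j + lam) ^ 2 ≤ min lam (((j:ℝ)+1) ^ (-β)) / lam ^ 2 := by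
    intro j
    have hj1 : (0:ℝ) < (j:ℝ) + 1 := by positivity
    have hσl : σ j ≤ ((j:ℝ)+1) ^ (-β) := by
      have := hσ j
      rwa [Real.rpow_neg hj1.le, ← one_div]
    have hsl : (0:ℝ) < σ j + lam := by linarith [hσ0 j]
    rcases min_cases lam (((j:ℝ)+1) ^ (-β)) with ⟨hm, _⟩ | ⟨hm, _⟩
    · rw [hm]
      calc σ j / (σ j + lam) ^ 2 ≤ 1 / (σ j + lam) := by
            rw [div_le_div_iff₀ (by positivity) hsl]
            nlinarith [hσ0 j]
        _ ≤ 1 / lam := by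
            apply one_div_le_one_div_of_le hlam
            linarith [hσ0 j]
        _ = lam / lam ^ 2 := by
            rw [sq]
            field_simp
    · rw [hm]
      calc σ j / (σ j + lam) ^ 2 ≤ σ j / lam ^ 2 := by
            gcongr
            · exact hσ0 j
            · linarith [hσ0 j]
        _ ≤ ((j:ℝ)+1) ^ (-β) / lam ^ 2 := by gcongr
  set t : ℝ := lam ^ (-(1/β)) with ht
  have hs0 : Summable (fun j : ℕ => ((j:ℝ)+1) ^ (-β)) := by
    have h0 := (Real.summable_nat_rpow (p := -β)).mpr (by linarith)
    have h1 := (summable_nat_add_iff 1).mpr h0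
    simpa using h1
  have hsmin : Summable (fun j : ℕ => min lam (((j:ℝ)+1) ^ (-β))) := by
    apply Summable.of_nonneg_of_le (fun j => le_min hlam.le (Real.rpow_nonneg (by positivity) _))
      (fun j => min_le_right _ _) hs0
  have hsg : Summable (fun j : ℕ => min lam (((j:ℝ)+1) ^ (-β)) / lam ^ 2) :=
    hsmin.div_const _
  have hsf : Summable (fun j : ℕ => σ j / (σ j + lam) ^ 2) := by
    apply Summable.of_nonneg_of_le (fun j => div_nonneg (hσ0 j) (sq_nonneg _)) hterm hsg
  have hl2 : (lam ^ 2 : ℝ) = lam ^ (2:ℝ) := by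
    rw [← Real.rpow_natCast lam 2]; norm_num
  have h1 : lam * t = lam ^ (1 - 1/β) := by
    rw [ht, show (1 - 1/β : ℝ) = 1 + -(1/β) by ring, Real.rpow_add hlam, Real.rpow_one]
  have h2 : t ^ (1 - β) = lam ^ (1 - 1/β) := by
    rw [ht, ← Real.rpow_mul hlam.le]
    congr 1
    field_simp
    ring
  calc ∑' j, σ j / (σ j + lam) ^ 2
      ≤ ∑' j : ℕ, min lam (((j:ℝ)+1) ^ (-β)) / lam ^ 2 := Summable.tsum_le_tsum hterm hsf hsg
    _ = (∑' j : ℕ, min lam (((j:ℝ)+1) ^ (-β))) / lam ^ 2 := tsum_div_const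
    _ ≤ (lam * t + t ^ (1 - β) / (β - 1)) / lam ^ 2 := by
        gcongr
        exact sum_min_le β hβ lam hlam
    _ = β / (β - 1) * lam ^ (-(1 + 1/β)) := by
        rw [h1, h2]
        have hb1 : (β - 1 : ℝ) ≠ 0 := by linarith
        have e1 : lam ^ (1-1/β) + lam ^ (1-1/β)/(β-1) = β/(β-1) * lam ^ (1-1/β) := by
          field_simp
          ring
        rw [e1, hl2, mul_div_assoc]
        congr 1
        rw [← Real.rpow_sub hlam]
        congr 1
        ring

/-- If the eigenvalues decay as `σ_j ≤ C/j^β` with `β > 1`, then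
`tr(Σ(Σ+λI)⁻²) = ∑_j σ_j/(σ_j+λ)² ≤ c_β λ^{-(1+1/β)}` with `c_β` depending only on
`β` and `C`; in particular when `σ_j ≤ 1/j^β` one can take `c_β = β/(β−1)`. -/
theorem stmt_14 (β C : ℝ) (hβ : 1 < β) (hC : 0 < C) :
    (∃ c : ℝ, 0 < c ∧ ∀ lam : ℝ, 0 < lam → ∀ σ : ℕ → ℝ, (∀ j, 0 ≤ σ j) →
        (∀ j : ℕ, σ j ≤ C / ((j : ℝ) + 1) ^ β) →
        ∑' j, σ j / (σ j + lam) ^ 2 ≤ c * lam ^ (-(1 + 1 / β))) ∧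
      (∀ lam : ℝ, 0 < lam → ∀ σ : ℕ → ℝ, (∀ j, 0 ≤ σ j) →
        (∀ j : ℕ, σ j ≤ 1 / ((j : ℝ) + 1) ^ β) →
        ∑' j, σ j / (σ j + lam) ^ 2 ≤ β / (β - 1) * lam ^ (-(1 + 1 / β))) := by
  constructor
  · refine ⟨C ^ (1/β) * (β/(β-1)), ?_, ?_⟩
    · exact mul_pos (Real.rpow_pos_of_pos hC _) (div_pos (by linarith) (by linarith))
    · intro lam hlam σ hσ0 hσC
      have hC0 : C ≠ 0 := hC.ne'
      set τ : ℕ → ℝ := fun j => σ j / C with hτdef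
      have hτ0 : ∀ j, 0 ≤ τ j := fun j => div_nonneg (hσ0 j) hC.le
      have hτ : ∀ j : ℕ, τ j ≤ 1 / ((j:ℝ)+1) ^ β := by
        intro j
        have hp : (0:ℝ) < ((j:ℝ)+1) ^ β := Real.rpow_pos_of_pos (by positivity) _
        have h := hσC j
        rw [le_div_iff₀ hp] at h ⊢
        rw [hτdef]
        rw [div_mul_eq_mul_div, div_le_iff₀ hC]
        linarith
      have hkey := key β hβ (lam/C) (div_pos hlam hC) τ hτ0 hτ
      have hrw : ∀ j, σ j / (σ j + lam) ^ 2 = (τ j / (τ j + lam/C) ^ 2) / C := by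
        intro j
        rw [hτdef]
        have hsl : σ j + lam ≠ 0 := ne_of_gt (by linarith [hσ0 j])
        field_simp
      have e1 : (lam / C) ^ (-(1+1/β)) / C = C ^ (1/β) * lam ^ (-(1+1/β)) := by
        rw [Real.div_rpow hlam.le hC.le, div_div, ← Real.rpow_add_one hC0,
          div_eq_mul_inv, ← Real.rpow_neg hC.le,
          show (-(-(1+1/β)+1) : ℝ) = 1/β by ring, mul_comm]
      calc ∑' j, σ j / (σ j + lam) ^ 2
          = ∑' j, (τ j / (τ j + lam/C) ^ 2) / C := tsum_congr hrw
        _ = (∑' j, τ j / (τ j + lam/C) ^ 2) / C := tsum_div_const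
        _ ≤ (β/(β-1) * (lam/C) ^ (-(1+1/β))) / C := by gcongr
        _ = C ^ (1/β) * (β/(β-1)) * lam ^ (-(1+1/β)) := by
            rw [mul_div_assoc, e1]
            ring
  · intro lam hlam σ hσ0 hσ1
    exact key β hβ lam hlam σ hσ0 hσ1
end

section
/- Let H be a Hilbert space, Σ a bounded positive self-adjoint operator with ‖Σ‖_op ≤ R², λ > 0, and let x ↦ K_x be a measurable map into H with ‖K_x‖ ≤ R and E[K_x ⊗ K_x] = Σ. Then E[(K_x⊗K_x + λI)·Σ(Σ+λI)^{−1}·(K_x⊗K_x + λI)] ⪯ (R² + 2λ)·Σ in the Loewner order. -/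
open MeasureTheory

set_option maxHeartbeats 1000000 in
/-- Operator inequality `E[(K_x⊗K_x + λI) Σ(Σ+λI)⁻¹ (K_x⊗K_x + λI)] ⪯ (R² + 2λ)Σ`
in the Loewner (quadratic-form) order; `S = Σ(Σ+λI)⁻¹` is encoded by
`S ∘ (Σ + λI) = Σ = (Σ + λI) ∘ S`. -/
theorem stmt_15 {X : Type*} [MeasurableSpace X] (μ : Measure X) [IsProbabilityMeasure μ]
    {H : Type*} [NormedAddCommGroup H] [InnerProductSpace ℝ H] [CompleteSpace H]
    (K : X → H) (R lam : ℝ) (hR : 0 < R) (hlam : 0 < lam)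
    (hK : ∀ x, ‖K x‖ ≤ R)
    (Sig : H →L[ℝ] H) (hSigsa : IsSelfAdjoint Sig)
    (hSig : ∀ v w : H, ∫ x, (inner ℝ v (((innerSL ℝ (K x)).smulRight (K x)) w) : ℝ) ∂μ =
      (inner ℝ v (Sig w) : ℝ))
    (S : H →L[ℝ] H)
    (hS₁ : S.comp (Sig + lam • ContinuousLinearMap.id ℝ H) = Sig)
    (hS₂ : (Sig + lam • ContinuousLinearMap.id ℝ H).comp S = Sig)
    (hint : ∀ v : H, Integrable (fun x =>
      (inner ℝ v ((((innerSL ℝ (K x)).smulRight (K x) + lam • ContinuousLinearMap.id ℝ H).comp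
        (S.comp ((innerSL ℝ (K x)).smulRight (K x) + lam • ContinuousLinearMap.id ℝ H))) v) : ℝ)) μ) :
    ∀ v : H, ∫ x,
        (inner ℝ v ((((innerSL ℝ (K x)).smulRight (K x) + lam • ContinuousLinearMap.id ℝ H).comp
          (S.comp ((innerSL ℝ (K x)).smulRight (K x) + lam • ContinuousLinearMap.id ℝ H))) v) : ℝ) ∂μ ≤
      (R ^ 2 + 2 * lam) * (inner ℝ v (Sig v) : ℝ) := by
  intro v
  -- reformulated second-moment identity
  have hSig' : ∀ u w : H,
      ∫ x, (inner ℝ (K x) u : ℝ) * (inner ℝ (K x) w : ℝ) ∂μ = (inner ℝ u (Sig w) : ℝ) := by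
    intro u w
    rw [← hSig u w]
    refine integral_congr_ae (Filter.Eventually.of_forall fun x => ?_)
    simp [ContinuousLinearMap.smulRight_apply, innerSL_apply_apply, real_inner_smul_right]
    rw [real_inner_comm u (K x)]
    ring
  have hpos : ∀ u : H, 0 ≤ (inner ℝ u (Sig u) : ℝ) := by
    intro u; rw [← hSig' u u]; exact integral_nonneg fun x => mul_self_nonneg _
  have hsym : ∀ u w : H, (inner ℝ u (Sig w) : ℝ) = (inner ℝ w (Sig u) : ℝ) := by
    intro u w
    rw [← hSig' u w, ← hSig' w u]
    exact integral_congr_ae (Filter.Eventually.of_forall fun x => by ring)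
  -- components of the algebraic hypotheses
  have hTS : ∀ u : H, Sig (S u) + lam • S u = Sig u := by
    intro u
    have := ContinuousLinearMap.ext_iff.mp hS₂ u
    simpa [ContinuousLinearMap.comp_apply, ContinuousLinearMap.add_apply,
      ContinuousLinearMap.smul_apply] using this
  have hST : ∀ u : H, S (Sig u) + lam • S u = Sig u := by
    intro u
    have := ContinuousLinearMap.ext_iff.mp hS₁ u
    simpa [ContinuousLinearMap.comp_apply, ContinuousLinearMap.add_apply,
      ContinuousLinearMap.smul_apply, map_add, _root_.map_smul] using this
  -- S is a positive contraction
  have hScontr : ∀ u : H, 0 ≤ (inner ℝ u (S u) : ℝ) ∧ (inner ℝ u (S u) : ℝ) ≤ ‖u‖ ^ 2 := by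
    intro u
    have hkey : lam • S u = Sig (u - S u) := by
      rw [map_sub, eq_sub_iff_add_eq, add_comm]
      exact hTS u
    have h1 : 0 ≤ (inner ℝ (u - S u) (Sig (u - S u)) : ℝ) := hpos _
    rw [← hkey, real_inner_smul_right] at h1
    have h1' : 0 ≤ (inner ℝ (u - S u) (S u) : ℝ) := nonneg_of_mul_nonneg_right h1 hlam
    rw [inner_sub_left] at h1'
    have hcs := real_inner_le_norm u (S u)
    have hs2 : (inner ℝ (S u) (S u) : ℝ) = ‖S u‖ ^ 2 := real_inner_self_eq_norm_sq _
    constructor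
    · nlinarith [norm_nonneg (S u), sq_nonneg (‖S u‖)]
    · nlinarith [sq_nonneg (‖u‖ - ‖S u‖), norm_nonneg u, norm_nonneg (S u)]
  -- kernel lemma for Sig
  have hker : ∀ u : H, (inner ℝ u (Sig u) : ℝ) = 0 → Sig u = 0 := by
    intro u hu
    by_contra hne
    have ha : (0 : ℝ) < ‖Sig u‖ ^ 2 := pow_pos (norm_pos_iff.mpr hne) 2
    have hD : 0 ≤ (inner ℝ (Sig u) (Sig (Sig u)) : ℝ) := hpos _
    set z := Sig u with hz
    set D := (inner ℝ z (Sig z) : ℝ) with hDdef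
    have key : ∀ t : ℝ, 0 ≤ 2 * t * ‖z‖ ^ 2 + t ^ 2 * D := by
      intro t
      have h := hpos (u + t • z)
      have hexp : (inner ℝ (u + t • z) (Sig (u + t • z)) : ℝ)
          = (inner ℝ u (Sig u) : ℝ) + t * (inner ℝ u (Sig z) : ℝ)
            + t * (inner ℝ z (Sig u) : ℝ) + t ^ 2 * D := by
        simp [map_add, _root_.map_smul, inner_add_left, inner_add_right,
          real_inner_smul_left, real_inner_smul_right, hDdef]
        ring
      rw [hexp, hu, hsym u z] at h
      have hzz : (inner ℝ z (Sig u) : ℝ) = ‖z‖ ^ 2 := by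
        rw [← hz]; exact real_inner_self_eq_norm_sq _
      rw [hzz] at h
      linarith
    have hD1 : (0 : ℝ) < D + 1 := by linarith
    have hk := key (-(‖z‖ ^ 2 / (D + 1)))
    have hD1ne : D + 1 ≠ 0 := ne_of_gt hD1
    field_simp at hk
    rw [zero_mul] at hk
    nlinarith [mul_pos (mul_pos (mul_pos ha ha) hD1) (show (0:ℝ) < D + 2 by linarith)]
  -- integrability of pairings
  by_cases hzero : ∀ w : H, Sig w = 0
  · -- degenerate case: Sig = 0, hence S = 0 and everything vanishes
    have hS0 : ∀ w : H, S w = 0 := by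
      intro w
      have h := ContinuousLinearMap.ext_iff.mp hS₁ w
      simp [ContinuousLinearMap.comp_apply, ContinuousLinearMap.add_apply,
        ContinuousLinearMap.smul_apply, hzero, map_add, _root_.map_smul,
        smul_eq_zero, hlam.ne'] at h
      exact h
    have : ∀ x, (inner ℝ v ((((innerSL ℝ (K x)).smulRight (K x) + lam • ContinuousLinearMap.id ℝ H).comp
          (S.comp ((innerSL ℝ (K x)).smulRight (K x) + lam • ContinuousLinearMap.id ℝ H))) v) : ℝ) = 0 := by
      intro x
      simp [ContinuousLinearMap.comp_apply, hS0]
    rw [integral_congr_ae (Filter.Eventually.of_forall this)]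
    simp [hzero v]
  · push_neg at hzero
    obtain ⟨w₀, hw₀⟩ := hzero
    have lemA' : ∀ u : H, Sig u ≠ 0 →
        Integrable (fun x => (inner ℝ (K x) u : ℝ) * (inner ℝ (K x) u : ℝ)) μ := by
      intro u hu
      by_contra h
      exact hu (hker u (by rw [← hSig' u u, integral_undef h]))
    have hq : ∀ u : H, Integrable (fun x => (inner ℝ (K x) u : ℝ) * (inner ℝ (K x) u : ℝ)) μ := by
      intro u
      by_cases hu : Sig u = 0
      · have h1 := lemA' (u + w₀) (by simp [map_add, hu, hw₀])
        have h2 := lemA' (u - w₀) (by simp [map_sub, hu, hw₀])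
        have h3 := lemA' w₀ hw₀
        have heq : (fun x => (inner ℝ (K x) u : ℝ) * (inner ℝ (K x) u : ℝ)) =
            fun x => (2 : ℝ)⁻¹ * (((inner ℝ (K x) (u + w₀) : ℝ) * (inner ℝ (K x) (u + w₀) : ℝ)
              + (inner ℝ (K x) (u - w₀) : ℝ) * (inner ℝ (K x) (u - w₀) : ℝ))
              - 2 * ((inner ℝ (K x) w₀ : ℝ) * (inner ℝ (K x) w₀ : ℝ))) := by
          funext x
          simp [inner_add_right, inner_sub_right]
          ring
        rw [heq]
        exact (((h1.add h2).sub (h3.const_mul 2)).const_mul _)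
      · exact lemA' u hu
    have hpair : ∀ u w : H,
        Integrable (fun x => (inner ℝ (K x) u : ℝ) * (inner ℝ (K x) w : ℝ)) μ := by
      intro u w
      have heq : (fun x => (inner ℝ (K x) u : ℝ) * (inner ℝ (K x) w : ℝ)) =
          fun x => (4 : ℝ)⁻¹ * ((inner ℝ (K x) (u + w) : ℝ) * (inner ℝ (K x) (u + w) : ℝ)
            - (inner ℝ (K x) (u - w) : ℝ) * (inner ℝ (K x) (u - w) : ℝ)) := by
        funext x
        simp [inner_add_right, inner_sub_right]
        ring
      rw [heq]
      exact ((hq (u + w)).sub (hq (u - w))).const_mul _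
    -- pointwise expansion of the quadratic form
    set Sd := ContinuousLinearMap.adjoint S with hSd
    have hpt : ∀ x, (inner ℝ v ((((innerSL ℝ (K x)).smulRight (K x) + lam • ContinuousLinearMap.id ℝ H).comp
          (S.comp ((innerSL ℝ (K x)).smulRight (K x) + lam • ContinuousLinearMap.id ℝ H))) v) : ℝ)
        = (inner ℝ (K x) v : ℝ) * (inner ℝ (K x) v : ℝ) * (inner ℝ (K x) (S (K x)) : ℝ)
          + lam * ((inner ℝ (K x) v : ℝ) * (inner ℝ (K x) (S v) : ℝ))
          + lam * ((inner ℝ (K x) (Sd v) : ℝ) * (inner ℝ (K x) v : ℝ))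
          + lam ^ 2 * (inner ℝ v (S v) : ℝ) := by
      intro x
      have had : (inner ℝ (K x) (Sd v) : ℝ) = (inner ℝ v (S (K x)) : ℝ) := by
        rw [real_inner_comm, hSd, ContinuousLinearMap.adjoint_inner_left]
      rw [had]
      simp only [ContinuousLinearMap.comp_apply, ContinuousLinearMap.add_apply,
        ContinuousLinearMap.smul_apply, ContinuousLinearMap.smulRight_apply, innerSL_apply_apply,
        ContinuousLinearMap.id_apply, map_add, _root_.map_smul, inner_add_right,
        real_inner_smul_right]
      rw [real_inner_comm v (K x)]
      ring
    -- the comparison function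
    set g₂ : X → ℝ := fun x => R ^ 2 * ((inner ℝ (K x) v : ℝ) * (inner ℝ (K x) v : ℝ))
      + lam * ((inner ℝ (K x) v : ℝ) * (inner ℝ (K x) (S v) : ℝ))
      + lam * ((inner ℝ (K x) (Sd v) : ℝ) * (inner ℝ (K x) v : ℝ))
      + lam ^ 2 * (inner ℝ v (S v) : ℝ) with hg₂def
    have hIg₂ : Integrable g₂ μ := by
      refine ((((hpair v v).const_mul _).add ((hpair v (S v)).const_mul _)).add
        ((hpair (Sd v) v).const_mul _)).add (integrable_const _)
    have hmono : ∀ x, (inner ℝ v ((((innerSL ℝ (K x)).smulRight (K x) + lam • ContinuousLinearMap.id ℝ H).comp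
          (S.comp ((innerSL ℝ (K x)).smulRight (K x) + lam • ContinuousLinearMap.id ℝ H))) v) : ℝ) ≤ g₂ x := by
      intro x
      simp only [hpt x, hg₂def]
      have h1 : (inner ℝ (K x) (S (K x)) : ℝ) ≤ ‖K x‖ ^ 2 := (hScontr (K x)).2
      have h2 : ‖K x‖ ^ 2 ≤ R ^ 2 := by nlinarith [norm_nonneg (K x), hK x]
      nlinarith [mul_self_nonneg (inner ℝ (K x) v : ℝ)]
    have hle : ∫ x, (inner ℝ v ((((innerSL ℝ (K x)).smulRight (K x) + lam • ContinuousLinearMap.id ℝ H).comp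
          (S.comp ((innerSL ℝ (K x)).smulRight (K x) + lam • ContinuousLinearMap.id ℝ H))) v) : ℝ) ∂μ
        ≤ ∫ x, g₂ x ∂μ := integral_mono (hint v) hIg₂ hmono
    have hval : ∫ x, g₂ x ∂μ = R ^ 2 * (inner ℝ v (Sig v) : ℝ)
        + lam * (inner ℝ v (Sig (S v)) : ℝ) + lam * (inner ℝ (Sd v) (Sig v) : ℝ)
        + lam ^ 2 * (inner ℝ v (S v) : ℝ) := by
      simp only [hg₂def]
      have i1 : Integrable (fun x => R ^ 2 * ((inner ℝ (K x) v : ℝ) * (inner ℝ (K x) v : ℝ))) μ :=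
        (hpair v v).const_mul _
      have i2 : Integrable (fun x => lam * ((inner ℝ (K x) v : ℝ) * (inner ℝ (K x) (S v) : ℝ))) μ :=
        (hpair v (S v)).const_mul _
      have i3 : Integrable (fun x => lam * ((inner ℝ (K x) (Sd v) : ℝ) * (inner ℝ (K x) v : ℝ))) μ :=
        (hpair (Sd v) v).const_mul _
      have i4 : Integrable (fun _ : X => lam ^ 2 * (inner ℝ v (S v) : ℝ)) μ := integrable_const _
      have i12 : Integrable (fun x => R ^ 2 * ((inner ℝ (K x) v : ℝ) * (inner ℝ (K x) v : ℝ))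
          + lam * ((inner ℝ (K x) v : ℝ) * (inner ℝ (K x) (S v) : ℝ))) μ := i1.add i2
      have i123 : Integrable (fun x => R ^ 2 * ((inner ℝ (K x) v : ℝ) * (inner ℝ (K x) v : ℝ))
          + lam * ((inner ℝ (K x) v : ℝ) * (inner ℝ (K x) (S v) : ℝ))
          + lam * ((inner ℝ (K x) (Sd v) : ℝ) * (inner ℝ (K x) v : ℝ))) μ := i12.add i3
      rw [integral_add i123 i4]
      rw [integral_add i12 i3]
      rw [integral_add i1 i2]
      rw [integral_const_mul, integral_const_mul, integral_const_mul]
      rw [hSig' v v, hSig' v (S v), hSig' (Sd v) v, integral_const]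
      simp
    have hval1 : (inner ℝ v (Sig (S v)) : ℝ) = (inner ℝ v (Sig v) : ℝ) - lam * (inner ℝ v (S v) : ℝ) := by
      have h : Sig (S v) = Sig v - lam • S v := by
        rw [eq_sub_iff_add_eq]
        exact hTS v
      rw [h, inner_sub_right, real_inner_smul_right]
    have hval2 : (inner ℝ (Sd v) (Sig v) : ℝ) = (inner ℝ v (Sig v) : ℝ) - lam * (inner ℝ v (S v) : ℝ) := by
      rw [hSd, ContinuousLinearMap.adjoint_inner_left]
      have h : S (Sig v) = Sig v - lam • S v := by
        rw [eq_sub_iff_add_eq]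
        exact hST v
      rw [h, inner_sub_right, real_inner_smul_right]
    have hC1 : 0 ≤ (inner ℝ v (S v) : ℝ) := (hScontr v).1
    rw [hval, hval1, hval2] at hle
    nlinarith [mul_nonneg (mul_nonneg hlam.le hlam.le) hC1]
end
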